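/- For any graph G, the cutwidth of G equals the width of G, where the width is defined via monotone set families: CW(G) = max over monotone families Ω ⊆ P(V(G)) with ∅ ∈ Ω and V(G) ∉ Ω, of the minimum over pairs (S₁, S₂) with S₂ ∈ Ω, S₁ ∉ Ω, S₁ = S₂ ∪ {v} for some vertex v, of max(|E(S₁, V\S₁)|, |E(S₂, V\S₂)|). -/

import Mathlib

open SimpleGraph

noncomputable def cutCount {V : Type*} (G : SimpleGraph V) (S : Set V) : ℕ :=
  {p : V × V | p.1 ∈ S ∧ p.2 ∉ S ∧ G.Adj p.1 p.2}.ncard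

/-- Cutwidth: the least `w` such that some linear ordering of the vertices has all
prefix cuts of size at most `w`. -/
noncomputable def cutwidth {V : Type*} [Fintype V] (G : SimpleGraph V) : ℕ :=
  sInf { w | ∃ π : Fin (Fintype.card V) ≃ V,
    ∀ i : Fin (Fintype.card V), cutCount G (π '' {j | j ≤ i}) ≤ w }

/-- Width of a graph, via monotone families: the supremum over monotone families
`Ω` (closed downward, containing `∅` and not containing `univ`) of the infimum,
over boundary pairs `(S₁, S₂)` with `S₂ ∈ Ω`, `S₁ ∉ Ω`, `S₁ = S₂ ∪ {v}`, of
`max(|E(S₁, S₁ᶜ)|, |E(S₂, S₂ᶜ)|)`. -/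
noncomputable def graphWidth {V : Type*} [Fintype V] (G : SimpleGraph V) : ℕ :=
  sSup { m | ∃ Ω : Set (Set V),
    (∀ S₁ S₂ : Set V, S₁ ⊆ S₂ → S₂ ∈ Ω → S₁ ∈ Ω) ∧
    (∅ : Set V) ∈ Ω ∧ (Set.univ : Set V) ∉ Ω ∧
    m = sInf { w | ∃ (S₁ S₂ : Set V) (v : V), S₂ ∈ Ω ∧ S₁ ∉ Ω ∧ S₁ = insert v S₂ ∧
      w = max (cutCount G S₁) (cutCount G S₂) } }

/-! ### Auxiliary lemmas about `cutCount` -/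

section Aux

variable {V : Type*}

lemma cutCount_empty (G : SimpleGraph V) : cutCount G (∅ : Set V) = 0 := by
  simp [cutCount]

lemma cutCount_univ (G : SimpleGraph V) : cutCount G (Set.univ : Set V) = 0 := by
  simp [cutCount]

lemma cutCount_le_card [Fintype V] (G : SimpleGraph V) (S : Set V) :
    cutCount G S ≤ Nat.card (V × V) := by
  rw [cutCount, ← Set.ncard_univ]
  exact Set.ncard_le_ncard (Set.subset_univ _) Set.finite_univ

lemma cutCount_submod [Fintype V] (G : SimpleGraph V) (A B : Set V) :
    cutCount G (A ∪ B) + cutCount G (A ∩ B) ≤ cutCount G A + cutCount G B := by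
  classical
  have key : ∀ S : Set V, cutCount G S =
      (Finset.univ.filter fun p : V × V => p.1 ∈ S ∧ p.2 ∉ S ∧ G.Adj p.1 p.2).card := by
    intro S
    rw [cutCount, ← Set.ncard_coe_finset]
    congr 1
    ext p
    simp
  simp only [key, Finset.card_filter]
  rw [← Finset.sum_add_distrib, ← Finset.sum_add_distrib]
  apply Finset.sum_le_sum
  intro p _
  by_cases h1 : p.1 ∈ A <;> by_cases h2 : p.1 ∈ B <;> by_cases h3 : p.2 ∈ A <;>
    by_cases h4 : p.2 ∈ B <;> by_cases h5 : G.Adj p.1 p.2 <;>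
    simp [Set.mem_union, Set.mem_inter_iff, h1, h2, h3, h4, h5]

/-! ### Crusades -/

/-- A crusade towards `A`: starts at `∅`, eventually constantly `A`, each step adds
at most one new vertex (arbitrary removals allowed), and all cuts at most `w'`. -/
def CruTo (G : SimpleGraph V) (w' : ℕ) (A : Set V) (r : ℕ) (X : ℕ → Set V) : Prop :=
  X 0 = ∅ ∧ (∀ i, r ≤ i → X i = A) ∧ (∀ i, (X (i+1) \ X i).Subsingleton) ∧
    (∀ i, cutCount G (X i) ≤ w')

/-- Reachability by crusades. -/
inductive CruReach (G : SimpleGraph V) (w' : ℕ) : Set V → Prop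
  | empty : CruReach G w' ∅
  | step {S T : Set V} (v : V) : CruReach G w' S → T ⊆ S → cutCount G T ≤ w' →
      cutCount G (insert v T) ≤ w' → CruReach G w' (insert v T)

lemma cruReach_cruTo {G : SimpleGraph V} {w' : ℕ} {A : Set V} (h : CruReach G w' A) :
    ∃ r X, CruTo G w' A r X := by
  induction h with
  | empty =>
    exact ⟨0, fun _ => ∅, rfl, fun _ _ => rfl, fun i => by simp, fun i => by
      simp [cutCount_empty]⟩
  | @step S T v hS hTS hT hvT ih =>
    obtain ⟨r, X, hX0, hXr, hstep, hcut⟩ := ih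
    refine ⟨r + 2, fun i => if i ≤ r then X i else if i = r + 1 then T else insert v T,
      ?_, ?_, ?_, ?_⟩
    · simp [hX0]
    · intro i hi
      have h1 : ¬ i ≤ r := by omega
      have h2 : i ≠ r + 1 := by omega
      simp [h1, h2]
    · intro i
      rcases lt_trichotomy i r with h | h | h
      · have : i + 1 ≤ r := h
        simp only [Nat.le_of_lt h, this, if_pos]
        exact hstep i
      · subst h
        simp only [le_refl, if_pos, if_neg (by omega : ¬ i + 1 ≤ i), if_pos rfl]
        have : T \ X i = ∅ := by
          rw [Set.diff_eq_empty]
          exact hTS.trans (by rw [hXr i le_rfl])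
        rw [this]; exact Set.subsingleton_empty
      · rcases Nat.eq_or_lt_of_le (Nat.succ_le_of_lt h) with h' | h'
        · -- i = r+1
          have hi : i = r + 1 := h'.symm
          subst hi
          simp only [if_neg (by omega : ¬ r+1 ≤ r), if_pos rfl,
            if_neg (by omega : ¬ r+2 ≤ r), if_neg (by omega : ¬ r+2 = r+1)]
          have hsub : (insert v T : Set V) \ T ⊆ {v} := by
            intro x hx
            rcases hx with ⟨hx1, hx2⟩
            rcases hx1 with h | h
            · exact h
            · exact absurd h hx2
          exact Set.subsingleton_singleton.anti hsub
        · have h1 : ¬ i ≤ r := by omega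
          have h2 : i ≠ r + 1 := by omega
          have h3 : ¬ i + 1 ≤ r := by omega
          have h4 : i + 1 ≠ r + 1 := by omega
          simp only [if_neg h1, if_neg h2, if_neg h3, if_neg h4]
          simp
    · intro i
      rcases le_or_gt i r with h | h
      · simp [h, hcut i]
      · by_cases h2 : i = r + 1 <;> simp [Nat.not_le.mpr h, h2, hT, hvT]

/-! ### Monotonization of crusades -/

noncomputable def Phi [Fintype V] (G : SimpleGraph V) (r : ℕ) (X : ℕ → Set V) : ℕ :=
  (∑ i ∈ Finset.range (r+1), cutCount G (X i)) * ((r+1) * Fintype.card V + 1) +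
    ∑ i ∈ Finset.range (r+1), (X i).ncard

lemma sum_ncard_le [Fintype V] (r : ℕ) (X : ℕ → Set V) :
    ∑ i ∈ Finset.range (r+1), (X i).ncard ≤ (r+1) * Fintype.card V := by
  calc ∑ i ∈ Finset.range (r+1), (X i).ncard
      ≤ ∑ _i ∈ Finset.range (r+1), Fintype.card V := by
        apply Finset.sum_le_sum
        intro i _
        classical
        rw [Set.ncard_eq_toFinset_card']
        exact Finset.card_le_univ _
    _ = (r+1) * Fintype.card V := by simp [Finset.sum_const, mul_comm]

lemma sum_comp_update {α : Type*} (f : ℕ → α) (g : α → ℕ) (i : ℕ) (b : α)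
    (s : Finset ℕ) (h : i ∈ s) :
    ∑ j ∈ s, g (Function.update f i b j) = g b + ∑ j ∈ s.erase i, g (f j) := by
  have e : (fun j => g (Function.update f i b j)) =
      Function.update (fun j => g (f j)) i (g b) := by
    funext j
    rcases eq_or_ne j i with rfl | hj
    · simp
    · simp [Function.update_of_ne hj]
  rw [e, Finset.sum_update_of_mem h, Finset.erase_eq]

lemma surgery [Fintype V] {G : SimpleGraph V} {w' r : ℕ} {X : ℕ → Set V}
    (h : CruTo G w' Set.univ r X) (hbad : ¬ ∀ i, X i ⊆ X (i+1)) :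
    ∃ Y, CruTo G w' Set.univ r Y ∧ Phi G r Y < Phi G r X := by
  obtain ⟨hX0, hXr, hstep, hcut⟩ := h
  push_neg at hbad
  obtain ⟨i, hi⟩ := hbad
  have hi1 : 1 ≤ i := by
    by_contra h
    have h0 : i = 0 := by omega
    exact hi (by rw [h0, hX0]; exact Set.empty_subset _)
  have hir : i + 1 < r := by
    by_contra h
    exact hi (by rw [hXr (i+1) (by omega)]; exact Set.subset_univ _)
  have hsub := cutCount_submod G (X i) (X (i+1))
  have hmem : i ∈ Finset.range (r+1) := Finset.mem_range.mpr (by omega)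
  have hmem1 : i + 1 ∈ Finset.range (r+1) := Finset.mem_range.mpr (by omega)
  by_cases hc : cutCount G (X i ∩ X (i+1)) ≤ cutCount G (X i)
  · -- replace X i by X i ∩ X (i+1)
    set D := X i ∩ X (i+1) with hD
    refine ⟨Function.update X i D, ⟨?_, ?_, ?_, ?_⟩, ?_⟩
    · rw [Function.update_of_ne (by omega : (0:ℕ) ≠ i)]; exact hX0
    · intro j hj
      rw [Function.update_of_ne (by omega : j ≠ i)]
      exact hXr j hj
    · intro j
      rcases eq_or_ne (j+1) i with h1 | h1
      · have e1 : Function.update X i D (j+1) = D := by rw [h1, Function.update_self]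
        have e2 : Function.update X i D j = X j :=
          Function.update_of_ne (by omega) _ _
        rw [e1, e2]
        refine (hstep j).anti ?_
        intro x hx
        refine ⟨?_, hx.2⟩
        rw [h1]
        exact hx.1.1
      · have e1 : Function.update X i D (j+1) = X (j+1) := Function.update_of_ne h1 _ _
        rcases eq_or_ne j i with h2 | h2
        · have e2 : Function.update X i D j = D := by rw [h2, Function.update_self]
          rw [e1, e2]
          refine (hstep j).anti ?_
          intro x hx
          refine ⟨hx.1, fun hxj => hx.2 ⟨by rw [← h2]; exact hxj, by rw [← h2]; exact hx.1⟩⟩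
        · rw [e1, Function.update_of_ne h2]
          exact hstep j
    · intro j
      rcases eq_or_ne j i with rfl | h1
      · rw [Function.update_self]
        exact hc.trans (hcut j)
      · rw [Function.update_of_ne h1]; exact hcut j
    · have ecY := sum_comp_update X (cutCount G) i D (Finset.range (r+1)) hmem
      have ecX := (Finset.add_sum_erase (Finset.range (r+1)) (fun j => cutCount G (X j)) hmem).symm
      have enY := sum_comp_update X Set.ncard i D (Finset.range (r+1)) hmem
      have enX := (Finset.add_sum_erase (Finset.range (r+1)) (fun j => (X j).ncard) hmem).symm
      unfold Phi
      rw [ecY, ecX, enY, enX]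
      have hlt : D.ncard < (X i).ncard := by
        apply Set.ncard_lt_ncard _ (Set.toFinite _)
        constructor
        · exact Set.inter_subset_left
        · intro hsub2
          exact hi fun x hx => (hsub2 hx).2
      exact add_lt_add_of_le_of_lt
        (Nat.mul_le_mul_right _ (add_le_add_left hc _))
        (add_lt_add_left hlt _)
  · -- replace X (i+1) by X i ∪ X (i+1)
    have hc2 : cutCount G (X i ∪ X (i+1)) + 1 ≤ cutCount G (X (i+1)) := by omega
    set U := X i ∪ X (i+1) with hU
    refine ⟨Function.update X (i+1) U, ⟨?_, ?_, ?_, ?_⟩, ?_⟩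
    · rw [Function.update_of_ne (by omega : (0:ℕ) ≠ i+1)]; exact hX0
    · intro j hj
      rw [Function.update_of_ne (by omega : j ≠ i+1)]
      exact hXr j hj
    · intro j
      rcases eq_or_ne (j+1) (i+1) with h1 | h1
      · have e1 : Function.update X (i+1) U (j+1) = U := by rw [h1, Function.update_self]
        have e2 : Function.update X (i+1) U j = X j :=
          Function.update_of_ne (by omega) _ _
        rw [e1, e2]
        have hji : j = i := by omega
        refine (hstep j).anti ?_
        intro x hx
        rcases hx.1 with hxa | hxb
        · exact absurd (by rw [hji]; exact hxa) hx.2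
        · exact ⟨by rw [hji]; exact hxb, hx.2⟩
      · have e1 : Function.update X (i+1) U (j+1) = X (j+1) := Function.update_of_ne h1 _ _
        rcases eq_or_ne j (i+1) with h2 | h2
        · have e2 : Function.update X (i+1) U j = U := by rw [h2, Function.update_self]
          rw [e1, e2]
          refine (hstep j).anti ?_
          intro x hx
          refine ⟨hx.1, fun hxj => hx.2 ?_⟩
          rw [h2] at hxj
          exact Set.mem_union_right _ hxj
        · rw [e1, Function.update_of_ne h2]
          exact hstep j
    · intro j
      rcases eq_or_ne j (i+1) with h1 | h1
      · rw [h1, Function.update_self]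
        exact le_trans (by omega) (hcut (i+1))
      · rw [Function.update_of_ne h1]; exact hcut j
    · have ecY := sum_comp_update X (cutCount G) (i+1) U (Finset.range (r+1)) hmem1
      have ecX := (Finset.add_sum_erase (Finset.range (r+1)) (fun j => cutCount G (X j)) hmem1).symm
      have hcardY := sum_ncard_le r (Function.update X (i+1) U)
      unfold Phi
      rw [ecY, ecX]
      set C := (r+1) * Fintype.card V + 1 with hC
      set R := ∑ j ∈ (Finset.range (r+1)).erase (i+1), cutCount G (X j) with hR
      have h3 : (cutCount G U + R + 1) * C ≤ (cutCount G (X (i+1)) + R) * C :=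
        Nat.mul_le_mul_right _ (by omega)
      rw [add_mul, one_mul] at h3
      have h4 : ∑ j ∈ Finset.range (r+1), (Function.update X (i+1) U j).ncard < C := by
        rw [hC]
        exact Nat.lt_succ_of_le hcardY
      have h5 : 0 ≤ ∑ j ∈ Finset.range (r+1), (X j).ncard := Nat.zero_le _
      linarith

lemma exists_mono_cruTo [Fintype V] {G : SimpleGraph V} {w' r : ℕ} {X : ℕ → Set V}
    (h : CruTo G w' Set.univ r X) :
    ∃ Y, CruTo G w' Set.univ r Y ∧ ∀ i, Y i ⊆ Y (i+1) := by
  have key : ∀ N (Z : ℕ → Set V), Phi G r Z ≤ N → CruTo G w' Set.univ r Z →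
      ∃ Y, CruTo G w' Set.univ r Y ∧ ∀ i, Y i ⊆ Y (i+1) := by
    intro N
    induction N with
    | zero =>
      intro Z hZ hcru
      by_cases hmono : ∀ i, Z i ⊆ Z (i+1)
      · exact ⟨Z, hcru, hmono⟩
      · obtain ⟨Y, _, hlt⟩ := surgery hcru hmono
        omega
    | succ N ih =>
      intro Z hZ hcru
      by_cases hmono : ∀ i, Z i ⊆ Z (i+1)
      · exact ⟨Z, hcru, hmono⟩
      · obtain ⟨Y, hY, hlt⟩ := surgery hcru hmono
        exact ih Y (by omega) hY
  exact key (Phi G r X) X le_rfl h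

/-! ### From a monotone crusade to an ordering -/

lemma ordering_of_mono_cruTo [Fintype V] {G : SimpleGraph V} {w' r : ℕ} {X : ℕ → Set V}
    (h : CruTo G w' Set.univ r X) (hm : ∀ i, X i ⊆ X (i+1)) :
    ∃ π : Fin (Fintype.card V) ≃ V,
      ∀ i : Fin (Fintype.card V), cutCount G (π '' {j | j ≤ i}) ≤ w' := by
  classical
  obtain ⟨hX0, hXr, hstep, hcut⟩ := h
  set n := Fintype.card V with hn
  have hmono : ∀ i j, i ≤ j → X i ⊆ X j := by
    intro i j hij
    induction hij with
    | refl => exact subset_rfl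
    | step _ ih => exact ih.trans (hm _)
  have hcard1 : ∀ i, (X (i+1)).ncard ≤ (X i).ncard + 1 := by
    intro i
    have e : X i ∪ (X (i+1) \ X i) = X (i+1) := Set.union_diff_cancel (hm i)
    have h1 : (X (i+1) \ X i).ncard ≤ 1 := by
      rw [Set.ncard_le_one_iff_eq]
      exact (hstep i).eq_empty_or_singleton
    calc (X (i+1)).ncard = (X i ∪ (X (i+1) \ X i)).ncard := by rw [e]
      _ ≤ (X i).ncard + (X (i+1) \ X i).ncard := Set.ncard_union_le _ _
      _ ≤ (X i).ncard + 1 := by omega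
  have hex : ∀ k, k ≤ n → ∃ i, k ≤ (X i).ncard := by
    intro k hk
    refine ⟨r, ?_⟩
    rw [hXr r le_rfl, Set.ncard_univ, Nat.card_eq_fintype_card]
    exact hk
  set D : ℕ → Set V := fun k =>
    if h : ∃ i, k ≤ (X i).ncard then X (Nat.find h) else Set.univ with hD
  have hDcut : ∀ k, cutCount G (D k) ≤ w' := by
    intro k
    rw [hD]
    by_cases h : ∃ i, k ≤ (X i).ncard
    · simp only [dif_pos h]; exact hcut _
    · simp only [dif_neg h, cutCount_univ]; omega
  have hDcard : ∀ k, k ≤ n → (D k).ncard = k := by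
    intro k hk
    have h := hex k hk
    rw [hD]
    simp only [dif_pos h]
    have hspec : k ≤ (X (Nat.find h)).ncard := Nat.find_spec h
    rcases Nat.eq_zero_or_pos (Nat.find h) with h0 | h0
    · rw [h0] at hspec ⊢
      rw [hX0] at hspec ⊢
      simp only [Set.ncard_empty] at hspec ⊢
      omega
    · obtain ⟨m, hm'⟩ : ∃ m, Nat.find h = m + 1 := ⟨Nat.find h - 1, by omega⟩
      have hmin : ¬ k ≤ (X m).ncard := Nat.find_min h (by omega)
      have := hcard1 m
      rw [hm'] at hspec ⊢
      omega
  have hDmono : ∀ k l, k ≤ l → D k ⊆ D l := by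
    intro k l hkl
    rw [hD]
    by_cases h2 : ∃ i, l ≤ (X i).ncard
    · have h1 : ∃ i, k ≤ (X i).ncard := by
        obtain ⟨i, hi⟩ := h2; exact ⟨i, by omega⟩
      simp only [dif_pos h1, dif_pos h2]
      refine hmono _ _ ?_
      exact Nat.find_mono (fun i hi => by omega)
    · by_cases h1 : ∃ i, k ≤ (X i).ncard
      · simp only [dif_pos h1, dif_neg h2]
        exact Set.subset_univ _
      · simp only [dif_neg h1, dif_neg h2]
        exact subset_rfl
  have hD0 : D 0 = ∅ := by
    rw [hD]
    have h : ∃ i, 0 ≤ (X i).ncard := ⟨0, Nat.zero_le _⟩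
    simp only [dif_pos h]
    have : Nat.find h = 0 := by
      rw [Nat.find_eq_zero]
      exact Nat.zero_le _
    rw [this, hX0]
  have hstep' : ∀ k, k < n → ∃ a, a ∉ D k ∧ D (k+1) = insert a (D k) := by
    intro k hk
    have hsub : D k ⊆ D (k+1) := hDmono k (k+1) (by omega)
    have hdiff : (D (k+1) \ D k).ncard = 1 := by
      rw [Set.ncard_diff hsub (Set.toFinite _), hDcard k (by omega),
        hDcard (k+1) (by omega)]
      omega
    obtain ⟨a, ha⟩ := Set.ncard_eq_one.mp hdiff
    refine ⟨a, ?_, ?_⟩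
    · have : a ∈ D (k+1) \ D k := by rw [ha]; exact rfl
      exact this.2
    · rw [← Set.union_diff_cancel hsub, ha, Set.union_singleton]
  set f : Fin n → V := fun j => (hstep' j j.isLt).choose with hf
  have hfspec : ∀ j : Fin n, f j ∉ D j ∧ D (j+1) = insert (f j) (D j) :=
    fun j => (hstep' j j.isLt).choose_spec
  have himg : ∀ m, m ≤ n → f '' {j : Fin n | (j : ℕ) < m} = D m := by
    intro m
    induction m with
    | zero =>
      intro _
      rw [hD0]
      convert Set.image_empty f
      ext j
      simp
    | succ m ih =>
      intro hm1
      have hmn : m < n := by omega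
      have e1 : {j : Fin n | (j : ℕ) < m + 1} =
          insert (⟨m, hmn⟩ : Fin n) {j : Fin n | (j : ℕ) < m} := by
        ext j
        simp only [Set.mem_setOf_eq, Set.mem_insert_iff, Fin.ext_iff]
        omega
      rw [e1, Set.image_insert_eq, ih (by omega)]
      have := (hfspec ⟨m, hmn⟩).2
      simp only at this
      rw [← this]
  have hinj : Function.Injective f := by
    have hlt : ∀ a b : Fin n, (a : ℕ) < (b : ℕ) → f a ≠ f b := by
      intro a b hab hfe
      have h1 : f a ∈ D ((a : ℕ) + 1) := by
        rw [(hfspec a).2]; exact Set.mem_insert _ _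
      have h2 : f a ∈ D b := hDmono _ _ (by omega) h1
      rw [hfe] at h2
      exact (hfspec b).1 h2
    intro a b hab
    by_contra hne
    rcases lt_or_gt_of_ne (fun h : (a : ℕ) = (b : ℕ) => hne (Fin.ext h)) with h | h
    · exact hlt a b h hab
    · exact hlt b a h hab.symm
  have hbij : Function.Bijective f :=
    (Fintype.bijective_iff_injective_and_card f).mpr ⟨hinj, by simp [hn]⟩
  refine ⟨Equiv.ofBijective f hbij, ?_⟩
  intro i
  have e2 : {j : Fin n | j ≤ i} = {j : Fin n | (j : ℕ) < (i : ℕ) + 1} := by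
    ext j
    simp only [Set.mem_setOf_eq, Fin.le_def, Nat.lt_succ_iff]
  have e3 : (Equiv.ofBijective f hbij) '' {j | j ≤ i} =
      f '' {j : Fin n | (j : ℕ) < (i : ℕ) + 1} := by
    rw [← e2]; rfl
  rw [e3, himg ((i : ℕ) + 1) (Nat.succ_le_of_lt i.isLt)]
  exact hDcut _

/-! ### Crossing a monotone family along an ordering -/

lemma crossing [Fintype V] {Ω : Set (Set V)} (h0 : (∅ : Set V) ∈ Ω)
    (hU : (Set.univ : Set V) ∉ Ω) (π : Fin (Fintype.card V) ≃ V) :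
    ∃ k : ℕ, ∃ hk : k < Fintype.card V,
      (π '' {j | (j : ℕ) < k}) ∈ Ω ∧ (π '' {j | (j : ℕ) < k + 1}) ∉ Ω ∧
      π '' {j | (j : ℕ) < k + 1} = insert (π ⟨k, hk⟩) (π '' {j | (j : ℕ) < k}) := by
  classical
  have hE0 : π '' {j | (j : ℕ) < 0} = ∅ := by
    convert Set.image_empty π.toFun
    all_goals (ext j; simp)
  have hEn : π '' {j | (j : ℕ) < Fintype.card V} = Set.univ := by
    have : {j : Fin (Fintype.card V) | (j : ℕ) < Fintype.card V} = Set.univ := by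
      ext j; simp [j.isLt]
    rw [this, Set.image_univ, Equiv.range_eq_univ]
  have hfind : ∃ k, π '' {j | (j : ℕ) < k} ∉ Ω := ⟨Fintype.card V, by rw [hEn]; exact hU⟩
  set K := Nat.find hfind with hK
  have hKspec : π '' {j | (j : ℕ) < K} ∉ Ω := Nat.find_spec hfind
  have hK0 : K ≠ 0 := by
    intro h
    rw [h, hE0] at hKspec
    exact hKspec h0
  have hKn : K ≤ Fintype.card V := Nat.find_min' hfind (by rw [hEn]; exact hU)
  refine ⟨K - 1, by omega, ?_, ?_, ?_⟩
  · have := Nat.find_min hfind (show K - 1 < K by omega)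
    exact not_not.mp this
  · have : K - 1 + 1 = K := by omega
    rw [this]
    exact hKspec
  · have e1 : {j : Fin (Fintype.card V) | (j : ℕ) < K - 1 + 1} =
        insert (⟨K - 1, by omega⟩ : Fin (Fintype.card V)) {j : Fin (Fintype.card V) | (j : ℕ) < K - 1} := by
      ext j
      simp only [Set.mem_setOf_eq, Set.mem_insert_iff, Fin.ext_iff]
      omega
    rw [e1, Set.image_insert_eq]

end Aux

/-- For any graph `G`, the cutwidth of `G` equals the width of `G`. -/
theorem cutwidth_eq_width {V : Type*} [Fintype V] (G : SimpleGraph V) :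
    cutwidth G = graphWidth G := by
  classical
  have hne : { w | ∃ π : Fin (Fintype.card V) ≃ V,
      ∀ i : Fin (Fintype.card V), cutCount G (π '' {j | j ≤ i}) ≤ w }.Nonempty :=
    ⟨Nat.card (V × V), (Fintype.equivFin V).symm, fun _ => cutCount_le_card G _⟩
  have hmemcw : cutwidth G ∈ { w | ∃ π : Fin (Fintype.card V) ≃ V,
      ∀ i : Fin (Fintype.card V), cutCount G (π '' {j | j ≤ i}) ≤ w } := by
    rw [cutwidth]
    exact Nat.sInf_mem hne
  obtain ⟨π₀, hπ₀⟩ := hmemcw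
  -- prefix conversion helper
  have hpref : ∀ (π : Fin (Fintype.card V) ≃ V) (k : ℕ) (hk : k < Fintype.card V),
      π '' {j | (j : ℕ) < k + 1} = π '' {j | j ≤ (⟨k, hk⟩ : Fin (Fintype.card V))} := by
    intro π k hk
    ext j
    simp only [Set.mem_setOf_eq, Fin.le_def, Nat.lt_succ_iff]
  -- Direction 1: every element of the width family is at most cutwidth.
  have dir1 : ∀ m ∈ { m | ∃ Ω : Set (Set V),
      (∀ S₁ S₂ : Set V, S₁ ⊆ S₂ → S₂ ∈ Ω → S₁ ∈ Ω) ∧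
      (∅ : Set V) ∈ Ω ∧ (Set.univ : Set V) ∉ Ω ∧
      m = sInf { w | ∃ (S₁ S₂ : Set V) (v : V), S₂ ∈ Ω ∧ S₁ ∉ Ω ∧ S₁ = insert v S₂ ∧
        w = max (cutCount G S₁) (cutCount G S₂) } }, m ≤ cutwidth G := by
    rintro m ⟨Ω, hmono, h0, hU, rfl⟩
    obtain ⟨k, hk, hin, hout, hins⟩ := crossing h0 hU π₀
    have hval : max (cutCount G (π₀ '' {j | (j : ℕ) < k + 1}))
        (cutCount G (π₀ '' {j | (j : ℕ) < k})) ∈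
        { w | ∃ (S₁ S₂ : Set V) (v : V), S₂ ∈ Ω ∧ S₁ ∉ Ω ∧ S₁ = insert v S₂ ∧
          w = max (cutCount G S₁) (cutCount G S₂) } :=
      ⟨_, _, _, hin, hout, hins, rfl⟩
    refine le_trans (Nat.sInf_le hval) ?_
    apply max_le
    · rw [hpref π₀ k hk]
      exact hπ₀ _
    · rcases Nat.eq_zero_or_pos k with rfl | hkpos
      · have : π₀ '' {j | (j : ℕ) < 0} = ∅ := by
          convert Set.image_empty π₀.toFun
          all_goals (ext j; simp)
        rw [this, cutCount_empty]
        exact Nat.zero_le _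
      · have hk' : k - 1 < Fintype.card V := by omega
        have : k - 1 + 1 = k := by omega
        rw [← this, hpref π₀ (k - 1) hk']
        exact hπ₀ _
  have dirA : graphWidth G ≤ cutwidth G := by
    rw [graphWidth]
    exact csSup_le' (fun m hm => dir1 m hm)
  -- Direction 2
  have dirB : cutwidth G ≤ graphWidth G := by
    rcases Nat.eq_zero_or_pos (cutwidth G) with h0' | hpos
    · rw [h0']
      exact Nat.zero_le _
    obtain ⟨w', hw'⟩ : ∃ w', cutwidth G = w' + 1 := ⟨cutwidth G - 1, by omega⟩
    have hnotreach : ¬ CruReach G w' Set.univ := by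
      intro hr
      obtain ⟨r, X, hcru⟩ := cruReach_cruTo hr
      obtain ⟨Y, hY, hmonoY⟩ := exists_mono_cruTo hcru
      obtain ⟨π, hπ⟩ := ordering_of_mono_cruTo hY hmonoY
      have : cutwidth G ≤ w' := Nat.sInf_le ⟨π, hπ⟩
      omega
    set Ω : Set (Set V) := { S | ∃ T, S ⊆ T ∧ CruReach G w' T } with hΩ
    have hmono : ∀ S₁ S₂ : Set V, S₁ ⊆ S₂ → S₂ ∈ Ω → S₁ ∈ Ω := by
      rintro S₁ S₂ h12 ⟨T, hsub, hreach⟩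
      exact ⟨T, h12.trans hsub, hreach⟩
    have h0 : (∅ : Set V) ∈ Ω := ⟨∅, subset_rfl, CruReach.empty⟩
    have hU : (Set.univ : Set V) ∉ Ω := by
      rintro ⟨T, hsub, hreach⟩
      have : T = Set.univ := Set.univ_subset_iff.mp hsub
      rw [this] at hreach
      exact hnotreach hreach
    set bset := { w | ∃ (S₁ S₂ : Set V) (v : V), S₂ ∈ Ω ∧ S₁ ∉ Ω ∧ S₁ = insert v S₂ ∧
        w = max (cutCount G S₁) (cutCount G S₂) } with hbset
    have hlb : ∀ x ∈ bset, cutwidth G ≤ x := by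
      rintro x ⟨S₁, S₂, v, hS₂, hS₁, hins, rfl⟩
      by_contra hx
      push_neg at hx
      rw [hw'] at hx
      have hc1 : cutCount G S₁ ≤ w' := by
        have := le_max_left (cutCount G S₁) (cutCount G S₂); omega
      have hc2 : cutCount G S₂ ≤ w' := by
        have := le_max_right (cutCount G S₁) (cutCount G S₂); omega
      obtain ⟨T, hsub, hreach⟩ := hS₂
      have : CruReach G w' (insert v S₂) :=
        CruReach.step v hreach hsub hc2 (by rw [← hins]; exact hc1)
      exact hS₁ ⟨insert v S₂, by rw [hins], this⟩
    have hbne : bset.Nonempty := by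
      obtain ⟨k, hk, hin, hout, hins⟩ := crossing h0 hU π₀
      exact ⟨_, _, _, _, hin, hout, hins, rfl⟩
    have hmemgw : sInf bset ∈ { m | ∃ Ω : Set (Set V),
        (∀ S₁ S₂ : Set V, S₁ ⊆ S₂ → S₂ ∈ Ω → S₁ ∈ Ω) ∧
        (∅ : Set V) ∈ Ω ∧ (Set.univ : Set V) ∉ Ω ∧
        m = sInf { w | ∃ (S₁ S₂ : Set V) (v : V), S₂ ∈ Ω ∧ S₁ ∉ Ω ∧ S₁ = insert v S₂ ∧
          w = max (cutCount G S₁) (cutCount G S₂) } } :=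
      ⟨Ω, hmono, h0, hU, rfl⟩
    have hbdd : BddAbove { m | ∃ Ω : Set (Set V),
        (∀ S₁ S₂ : Set V, S₁ ⊆ S₂ → S₂ ∈ Ω → S₁ ∈ Ω) ∧
        (∅ : Set V) ∈ Ω ∧ (Set.univ : Set V) ∉ Ω ∧
        m = sInf { w | ∃ (S₁ S₂ : Set V) (v : V), S₂ ∈ Ω ∧ S₁ ∉ Ω ∧ S₁ = insert v S₂ ∧
          w = max (cutCount G S₁) (cutCount G S₂) } } :=
      ⟨cutwidth G, fun m hm => dir1 m hm⟩
    calc cutwidth G ≤ sInf bset := le_csInf hbne hlb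
      _ ≤ graphWidth G := by
          rw [graphWidth]
          exact le_csSup hbdd hmemgw
  omega
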